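/- In the joint-venture game where each player chooses Work (W) or Shirk (S) with payoffs u(S,S)=(0,0), u(W,W)=(4,4), u(W,S)=(1,5), u(S,W)=(5,1), the profile (W,W) played with probability one is an interdependent-choice equilibrium but is not a Nash equilibrium. -/
import Mathlib

open Finset

/-- Joint-venture payoffs: `true` = Work, `false` = Shirk. -/
def jvU1 : Bool → Bool → ℝ
  | true, true => 4
  | true, false => 1
  | false, true => 5
  | false, false => 0

def jvU2 (a1 a2 : Bool) : ℝ := jvU1 a2 a1

/-- `α` is an interdependent-choice equilibrium (threats = full action set). -/
noncomputable def jvICE (α : Bool × Bool → ℝ) : Prop :=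
  (∀ a, 0 ≤ α a) ∧ (∑ a, α a = 1) ∧
  ∃ θ : Bool × Bool → ℝ, (∀ a, 0 ≤ θ a ∧ θ a ≤ 1) ∧
    (∀ a1 a1' : Bool, 0 ≤ ∑ a2, α (a1, a2) *
      (jvU1 a1 a2 - (1 - θ (a1, a2)) * jvU1 a1' a2
        - θ (a1, a2) * min (jvU1 a1' true) (jvU1 a1' false))) ∧
    (∀ a2 a2' : Bool, 0 ≤ ∑ a1, α (a1, a2) *
      (jvU2 a1 a2 - θ (a1, a2) * jvU2 a1 a2'
        - (1 - θ (a1, a2)) * min (jvU2 true a2') (jvU2 false a2')))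

/-- (W,W) with probability one is an ICE of the joint-venture game, but (W,W) is not
a Nash equilibrium of the simultaneous-move game. -/
theorem stmt5 :
    jvICE (fun a => if a = (true, true) then 1 else 0) ∧
    ¬ ((∀ a1' : Bool, jvU1 a1' true ≤ jvU1 true true) ∧
       (∀ a2' : Bool, jvU2 true a2' ≤ jvU2 true true)) := by
  constructor
  · refine ⟨fun a => by dsimp only; split <;> norm_num, by simp [Fintype.sum_prod_type, Fintype.sum_bool], fun _ => 1/2, ?_, ?_, ?_⟩
    · intro a; norm_num
    · intro a1 a1'
      simp [Fintype.sum_bool]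
      cases a1 <;> cases a1' <;> simp [jvU1] <;> norm_num
    · intro a2 a2'
      simp [Fintype.sum_bool]
      cases a2 <;> cases a2' <;> simp [jvU2, jvU1] <;> norm_num
  · rintro ⟨h1, _⟩
    have := h1 false
    simp [jvU1] at this
    norm_num at this
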